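/- Let T be a complex algebraic torus with involution θ and β a θ-fixed character of T with coroot β^∨ satisfying ⟨β, β^∨⟩ = 2 and θ ∘ β^∨ = β^∨. Then the natural map ker(β|_{T^θ}) / ker(β|_{(T^θ)⁰}) → T^θ / (T^θ)⁰ induced by inclusion is an isomorphism of groups. -/

import Mathlib

/-- The complex torus `T = (ℂˣ)^n`. -/
abbrev Torus (n : ℕ) := Fin n → ℂˣ

/-- The algebraic character of `T = (ℂˣ)^n` with exponent vector `k ∈ X*(T) = ℤ^n`. -/
def torusChar {n : ℕ} (k : Fin n → ℤ) : Torus n →* ℂˣ where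
  toFun t := ∏ i, (t i) ^ (k i)
  map_one' := by simp
  map_mul' s t := by
    simp [Pi.mul_apply, mul_zpow, Finset.prod_mul_distrib]

/-- The algebraic cocharacter of `T = (ℂˣ)^n` with exponent vector `c ∈ X_*(T) = ℤ^n`. -/
def torusCochar {n : ℕ} (c : Fin n → ℤ) : ℂˣ →* Torus n where
  toFun z := fun i => z ^ (c i)
  map_one' := by funext i; simp
  map_mul' z w := by funext i; simp [mul_zpow]

/-- The fixed subgroup `T^θ` of an endomorphism `θ` of the torus. -/
def fixedSubgroup {n : ℕ} (θ : Torus n →* Torus n) : Subgroup (Torus n) where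
  carrier := {t | θ t = t}
  one_mem' := by simp
  mul_mem' := by intro a b ha hb; simp only [Set.mem_setOf_eq] at *; simp [ha, hb]
  inv_mem' := by intro a ha; simp only [Set.mem_setOf_eq] at *; simp [ha]

/-- The identity component `(T^θ)⁰ = (1+θ)T`, the image of `t ↦ t·θ(t)`. -/
def normSubgroup {n : ℕ} (θ : Torus n →* Torus n) : Subgroup (Torus n) :=
  (MonoidHom.id (Torus n) * θ).range

lemma exists_sqrt_units (w : ℂˣ) : ∃ v : ℂˣ, v ^ 2 = w := by
  obtain ⟨z, hz⟩ := IsAlgClosed.exists_pow_nat_eq (w : ℂ) (n := 2) (by norm_num)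
  have hz0 : z ≠ 0 := by
    intro h; rw [h] at hz; simp at hz; exact w.ne_zero hz.symm
  exact ⟨Units.mk0 z hz0, by ext; push_cast [hz]; simp [hz]⟩

lemma zpow_finset_sum {ι : Type*} (z : ℂˣ) (s : Finset ι) (f : ι → ℤ) :
    z ^ (∑ i ∈ s, f i) = ∏ i ∈ s, z ^ f i := by
  classical
  induction s using Finset.induction with
  | empty => simp
  | insert _ _ h ih => rw [Finset.sum_insert h, Finset.prod_insert h, zpow_add, ih]

lemma char_cochar {n : ℕ} (k c : Fin n → ℤ) (z : ℂˣ) :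
    torusChar k (torusCochar c z) = z ^ (∑ i, c i * k i) := by
  simp only [torusChar, torusCochar, MonoidHom.coe_mk, OneHom.coe_mk, ← zpow_mul]
  rw [zpow_finset_sum]

/-- Let `θ` be an algebraic involution of `T = (ℂˣ)^n` and `β = torusChar k` a `θ`-fixed
character with `θ`-fixed coroot `β^∨ = torusCochar c`, `⟨β,β^∨⟩ = 2`.  Then the natural
map `ker(β|_{T^θ}) / ker(β|_{(T^θ)⁰}) → T^θ/(T^θ)⁰` induced by inclusion is an
isomorphism: the composite `ker(β|_{T^θ}) → T^θ/(T^θ)⁰` is surjective with kernel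
`ker(β|_{(T^θ)⁰}) = (T^θ)⁰ ∩ ker β`, where `(T^θ)⁰ = (1+θ)T`. -/
theorem kernel_component_group_iso
    (n : ℕ) (θ : Torus n →* Torus n) (hcont : Continuous θ) (hθ : ∀ t, θ (θ t) = t)
    (k c : Fin n → ℤ)
    (hβθ : ∀ t, torusChar k (θ t) = torusChar k t)
    (hθc : ∀ z : ℂˣ, θ (torusCochar c z) = torusCochar c z)
    (hpair : ∑ i, c i * k i = 2) :
    Function.Surjective
      ((QuotientGroup.mk' ((normSubgroup θ).subgroupOf (fixedSubgroup θ))).comp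
        (Subgroup.inclusion
          (inf_le_left : fixedSubgroup θ ⊓ (torusChar k).ker ≤ fixedSubgroup θ))) ∧
    ((QuotientGroup.mk' ((normSubgroup θ).subgroupOf (fixedSubgroup θ))).comp
        (Subgroup.inclusion
          (inf_le_left : fixedSubgroup θ ⊓ (torusChar k).ker ≤ fixedSubgroup θ))).ker
      = (normSubgroup θ ⊓ (torusChar k).ker).subgroupOf
          (fixedSubgroup θ ⊓ (torusChar k).ker) := by
  constructor
  · -- surjectivity
    intro q
    obtain ⟨x, rfl⟩ := QuotientGroup.mk'_surjective _ q
    obtain ⟨w, hw⟩ := exists_sqrt_units (torusChar k (x : Torus n))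
    obtain ⟨v, hv⟩ := exists_sqrt_units w
    have hxfix : θ (x : Torus n) = x := x.2
    set s0 : Torus n := (x : Torus n) * torusCochar c w⁻¹ with hs0
    have hsfix : s0 ∈ fixedSubgroup θ := by
      show θ s0 = s0
      rw [hs0, map_mul, hxfix, hθc]
    have hsker : s0 ∈ (torusChar k).ker := by
      rw [MonoidHom.mem_ker, hs0, map_mul, char_cochar, hpair, ← hw]
      group
    refine ⟨⟨s0, Subgroup.mem_inf.2 ⟨hsfix, hsker⟩⟩, ?_⟩
    simp only [MonoidHom.comp_apply, QuotientGroup.mk'_apply]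
    rw [QuotientGroup.eq]
    rw [Subgroup.mem_subgroupOf]
    show s0⁻¹ * (x : Torus n) ∈ normSubgroup θ
    have h1 : s0⁻¹ * (x : Torus n) = torusCochar c w := by
      rw [hs0, mul_inv_rev, mul_assoc, inv_mul_cancel, mul_one, ← map_inv, inv_inv]
    rw [h1]
    refine ⟨torusCochar c v, ?_⟩
    show (torusCochar c v) * θ (torusCochar c v) = torusCochar c w
    rw [hθc, ← sq, ← map_pow, hv]
  · -- kernel
    ext x
    have hxk : (x : Torus n) ∈ (torusChar k).ker := x.2.2
    simp only [MonoidHom.mem_ker, MonoidHom.comp_apply, QuotientGroup.mk'_apply,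
      QuotientGroup.eq_one_iff, Subgroup.mem_subgroupOf, Subgroup.coe_inclusion,
      Subgroup.mem_inf]
    exact ⟨fun h => ⟨h, hxk⟩, fun h => h.1⟩
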